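/- Let X be a finite set of boolean variables and let φ be a conjunction of clauses C₁,…,Cₙ where each clause Cᵢ is a triple (x₁ⁱ, x₂ⁱ, x₃ⁱ) ∈ X³. Consider the ranked alphabet Σ = {nil of arity 0} ∪ { x of arity 1 : x ∈ X }, the output alphabet Γ = {a, #}, and the sample S assigning S(nil) = '#' and, for each clause (x, y, z) of φ, S(x(y(z(nil)))) = 'a#'. Then there exists a 1STS τ over Σ with output in Γ* such that ⟦τ⟧(t) = w for all (t, w) ∈ S if and only if there exists an assignment ν : X → {true, false} such that in every clause of φ exactly one of the three variables is assigned true. -/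

import Mathlib

/-- Trees labelled by symbols from `F`, with a finite list of children at each node. -/
inductive RTree (F : Type) : Type
  | node (f : F) (children : List (RTree F)) : RTree F

namespace RTree

mutual
  /-- The semantics `⟦τ⟧` of a 1STS whose constants are `δ(f) = (τ f 0, …, τ f (ar f))`:
  `⟦τ⟧(f(t₁,…,t_k)) = u₀·⟦τ⟧(t₁)·u₁⋯⟦τ⟧(t_k)·u_k`. -/
  def sem {F Γ : Type} (τ : F → ℕ → List Γ) : RTree F → List Γ
    | .node f ts => τ f 0 ++ semList τ f 1 ts
  def semList {F Γ : Type} (τ : F → ℕ → List Γ) (f : F) : ℕ → List (RTree F) → List Γ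
    | _, [] => []
    | i, t :: ts => sem τ t ++ τ f i ++ semList τ f (i + 1) ts
end

end RTree

/-- The ranked alphabet `Σ = {nil (arity 0)} ∪ {x (arity 1) : x ∈ X}`. -/
inductive SatSym (X : Type) : Type
  | nil : SatSym X
  | var (x : X) : SatSym X

/-- The output alphabet `Γ = {a, #}`. -/
inductive SatLetter : Type
  | a : SatLetter
  | hash : SatLetter

/-- The tree `nil`. -/
def tNil {X : Type} : RTree (SatSym X) := .node .nil []

/-- The tree `x(y(z(nil)))` associated to a clause `(x, y, z)`. -/
def tClause {X : Type} (x y z : X) : RTree (SatSym X) :=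
  .node (.var x) [.node (.var y) [.node (.var z) [tNil]]]

/-- There is a 1STS `τ` consistent with the sample `S(nil) = '#'`,
`S(x(y(z(nil)))) = 'a#'` for every clause `(x,y,z)`, iff the one-in-three positive SAT
instance is satisfiable: some assignment `ν` makes exactly one variable true in each
clause. -/
theorem exists_1STS_iff_oneInThreeSat (X : Type) [Fintype X]
    (clauses : List (X × X × X)) :
    (∃ τ : SatSym X → ℕ → List SatLetter,
        RTree.sem τ tNil = [SatLetter.hash] ∧
        ∀ cl ∈ clauses,
          RTree.sem τ (tClause cl.1 cl.2.1 cl.2.2) = [SatLetter.a, SatLetter.hash]) ↔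
      (∃ ν : X → Bool, ∀ cl ∈ clauses,
        [ν cl.1, ν cl.2.1, ν cl.2.2].count true = 1) := by
  constructor
  · rintro ⟨τ, hnil, hcl⟩
    refine ⟨fun v => decide ¬((τ (.var v) 0).length + (τ (.var v) 1).length = 0), ?_⟩
    intro cl hmem
    have h := hcl cl hmem
    simp only [tClause, tNil, RTree.sem, RTree.semList] at h hnil
    rw [hnil] at h
    have hlen := congrArg List.length h
    simp [List.length_append] at hlen
    by_cases h1 : (τ (.var cl.1) 0).length + (τ (.var cl.1) 1).length = 0 <;>
      by_cases h2 : (τ (.var cl.2.1) 0).length + (τ (.var cl.2.1) 1).length = 0 <;>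
      by_cases h3 : (τ (.var cl.2.2) 0).length + (τ (.var cl.2.2) 1).length = 0 <;>
      simp [h1, h2, h3, List.count_cons, -List.length_eq_zero_iff] <;> omega
  · rintro ⟨ν, hν⟩
    refine ⟨fun f i => match f, i with
      | .nil, 0 => [.hash]
      | .var v, 0 => if ν v then [.a] else []
      | _, _ => [], ?_, ?_⟩
    · simp [tNil, RTree.sem, RTree.semList]
    · intro cl hmem
      have h := hν cl hmem
      simp only [tClause, tNil, RTree.sem, RTree.semList]
      cases hx : ν cl.1 <;> cases hy : ν cl.2.1 <;> cases hz : ν cl.2.2 <;>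
        simp_all [List.count_cons]
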